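/- If X and Y are independent uniform random variables on {0,1}^n, and an adversary is given x ⊕ r and y ⊕ r for a uniformly random shared string r, together with |x| mod 4 and |y| mod 4, then the adversary can compute x·y exactly; moreover the conditional min-entropy of X given all this stored information is at least n − O(1). -/

import Mathlib

open scoped Kronecker ComplexOrder
open Matrix BigOperators

/-- Schatten-1 norm `‖A‖₁ = Tr √(AᴴA)`. -/
noncomputable def trNorm {n m : Type*} [Fintype n] [Fintype m] [DecidableEq m] (A : Matrix n m ℂ) : ℝ :=
  (((Matrix.posSemidef_conjTranspose_mul_self A).1.eigenvectorUnitary : Matrix m m ℂ) *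
      diagonal ((fun r : ℝ => (r : ℂ)) ∘ (Real.sqrt ·) ∘ (Matrix.posSemidef_conjTranspose_mul_self A).1.eigenvalues) *
      (star (Matrix.posSemidef_conjTranspose_mul_self A).1.eigenvectorUnitary : Matrix m m ℂ)).trace.re

/-- Trace distance `(1/2)‖A − B‖₁`. -/
noncomputable def trDist {n : Type*} [Fintype n] [DecidableEq n] (A B : Matrix n n ℂ) : ℝ :=
  (1/2) * trNorm (A - B)

/-- `ρ` is a density matrix. -/
def IsDensity {n : Type*} [Fintype n] (ρ : Matrix n n ℂ) : Prop :=
  ρ.PosSemidef ∧ ρ.trace = 1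

/-- The stored information `(x ⊕ r, y ⊕ r, |x| mod 4, |y| mod 4)`. -/
def store16 (n : ℕ) (x y r : Fin n → ZMod 2) :
    (Fin n → ZMod 2) × (Fin n → ZMod 2) × ZMod 4 × ZMod 4 :=
  (x + r, y + r, ((∑ j, (x j).val : ℕ) : ZMod 4), ((∑ j, (y j).val : ℕ) : ZMod 4))

section Aux
open Finset

def wclass (m : ℕ) (p : ZMod 4) : Finset (Fin m → ZMod 2) :=
  Finset.univ.filter (fun z => ((∑ j, (z j).val : ℕ) : ZMod 4) = p)

lemma wclass3 : ∀ p : ZMod 4, (wclass 3 p).Nonempty := by decide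

lemma wclass_nonempty {m : ℕ} (hm : 3 ≤ m) (p : ZMod 4) : (wclass m p).Nonempty := by
  induction m with
  | zero => omega
  | succ k ih =>
    rcases Nat.lt_or_ge k 3 with hk | hk
    · have : k + 1 = 3 := by omega
      rw [this]
      exact wclass3 p
    · obtain ⟨z, hz⟩ := ih hk
      refine ⟨Fin.cons 0 z, ?_⟩
      simp only [wclass, mem_filter, mem_univ, true_and] at hz ⊢
      rw [Fin.sum_univ_succ]
      simpa using hz

lemma wclass_split (k : ℕ) (p : ZMod 4) :
    (wclass (k+1) p).card = ∑ b : ZMod 2, (wclass k (p - b.val)).card := by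
  rw [Finset.card_eq_sum_card_fiberwise (f := fun f => f 0) (t := Finset.univ) (fun _ _ => mem_univ _)]
  refine Finset.sum_congr rfl fun b _ => ?_
  refine Finset.card_nbij' (fun f => Fin.tail f) (fun z => Fin.cons b z) ?_ ?_ ?_ ?_
  · intro f hf
    simp only [Finset.mem_coe, wclass, mem_filter, mem_univ, true_and, Fin.sum_univ_succ] at hf ⊢
    obtain ⟨h1, h2⟩ := hf
    push_cast at h1
    rw [h2] at h1
    unfold Fin.tail
    push_cast
    linear_combination h1
  · intro z hz
    simp only [Finset.mem_coe, wclass, mem_filter, mem_univ, true_and, Fin.sum_univ_succ] at hz ⊢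
    constructor
    · push_cast at hz ⊢
      simp only [Fin.cons_zero, Fin.cons_succ]
      linear_combination hz
    · simp
  · intro f hf
    have h2 : f 0 = b := (Finset.mem_filter.mp hf).2
    rw [← h2]
    exact Fin.cons_self_tail f
  · intro z hz
    simp

lemma wclass_card_ge (m : ℕ) (p : ZMod 4) (hne : (wclass m p).Nonempty) :
    (2:ℝ) ^ ((m:ℝ) - 3) ≤ ((wclass m p).card : ℝ) := by
  induction m generalizing p with
  | zero =>
    have h1 : (1:ℝ) ≤ ((wclass 0 p).card : ℝ) := by
      exact_mod_cast Finset.card_pos.mpr hne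
    refine le_trans ?_ h1
    apply Real.rpow_le_one_of_one_le_of_nonpos one_le_two
    norm_num
  | succ k ih =>
    rcases Nat.lt_or_ge k 3 with hk | hk
    · have h1 : (1:ℝ) ≤ ((wclass (k+1) p).card : ℝ) := by
        exact_mod_cast Finset.card_pos.mpr hne
      refine le_trans ?_ h1
      apply Real.rpow_le_one_of_one_le_of_nonpos one_le_two
      have : (k:ℝ) ≤ 2 := by exact_mod_cast Nat.le_of_lt_succ hk
      push_cast
      linarith
    · have hsum := wclass_split k p
      have hb : ∀ b : ZMod 2, (2:ℝ) ^ ((k:ℝ) - 3) ≤ ((wclass k (p - b.val)).card : ℝ) :=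
        fun b => ih _ (wclass_nonempty hk _)
      have hstep : (2:ℝ) ^ ((k:ℝ) - 3) * 2 ≤ ((wclass (k+1) p).card : ℝ) := by
        rw [hsum]
        push_cast
        have h2 : ∑ b : ZMod 2, ((wclass k (p - b.val)).card : ℝ)
            ≥ ∑ _b : ZMod 2, (2:ℝ) ^ ((k:ℝ) - 3) :=
          Finset.sum_le_sum (fun b _ => hb b)
        rw [Finset.sum_const] at h2
        have hcard : (Finset.univ : Finset (ZMod 2)).card = 2 := by decide
        rw [hcard] at h2
        simpa [mul_comm] using h2
      calc (2:ℝ) ^ (((k+1:ℕ):ℝ) - 3) = 2 ^ ((k:ℝ) - 3) * 2 := by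
            rw [← Real.rpow_add_one two_ne_zero]
            push_cast
            ring_nf
        _ ≤ _ := hstep

lemma wclassGen_card_ge (ι : Type) [Fintype ι] [DecidableEq ι] (p : ZMod 4)
    (hne : ∃ z : ι → ZMod 2, ((∑ j, (z j).val : ℕ) : ZMod 4) = p) :
    (2:ℝ) ^ ((Fintype.card ι : ℝ) - 3) ≤
      ((Finset.univ.filter (fun z : ι → ZMod 2 =>
        ((∑ j, (z j).val : ℕ) : ZMod 4) = p)).card : ℝ) := by
  set m := Fintype.card ι
  have e : ι ≃ Fin m := Fintype.equivFin ι
  have hcard : (Finset.univ.filter (fun z : ι → ZMod 2 =>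
      ((∑ j, (z j).val : ℕ) : ZMod 4) = p)).card = (wclass m p).card := by
    refine Finset.card_nbij' (fun z => z ∘ e.symm) (fun z => z ∘ e) ?_ ?_ ?_ ?_
    · intro z hz
      simp only [Finset.mem_coe, wclass, mem_filter, mem_univ, true_and, Function.comp] at hz ⊢
      rw [Equiv.sum_comp e.symm (fun i => (z i).val)]
      exact hz
    · intro z hz
      simp only [Finset.mem_coe, wclass, mem_filter, mem_univ, true_and, Function.comp] at hz ⊢
      rw [Equiv.sum_comp e (fun i => (z i).val)]
      exact hz
    · intro z _; funext i; simp
    · intro z _; funext i; simp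
  rw [hcard]
  apply wclass_card_ge
  obtain ⟨z, hz⟩ := hne
  refine ⟨z ∘ e.symm, ?_⟩
  simp only [wclass, mem_filter, mem_univ, true_and, Function.comp]
  rw [Equiv.sum_comp e.symm (fun i => (z i).val)]
  exact hz

lemma zmod2_ne_one' : ∀ u : ZMod 2, ¬ u = 1 → u = 0 := by decide
lemma zmod2_ne_one {u : ZMod 2} (h : ¬ u = 1) : u = 0 := zmod2_ne_one' u h

lemma cast_val_add_one (u : ZMod 2) : (((u + 1).val : ℕ) : ZMod 4) = 1 - ((u.val : ℕ) : ZMod 4) := by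
  revert u; decide

lemma T_card_ge (n : ℕ) (w : Fin n → ZMod 2) (s t : ZMod 4) (x : Fin n → ZMod 2)
    (hs : ((∑ j, (x j).val : ℕ) : ZMod 4) = s)
    (ht : ((∑ j, (x j + w j).val : ℕ) : ZMod 4) = t) :
    (2:ℝ) ^ ((n:ℝ) - 6) ≤
      ((Finset.univ.filter (fun z : Fin n → ZMod 2 =>
        ((∑ j, (z j).val : ℕ) : ZMod 4) = s ∧
        ((∑ j, (z j + w j).val : ℕ) : ZMod 4) = t)).card : ℝ) := by
  classical
  set P : Fin n → Prop := fun j => w j = 1 with hP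
  set p₀ : ZMod 4 := ((∑ i : {j // P j}, (x i).val : ℕ) : ZMod 4) with hp₀
  set q₀ : ZMod 4 := ((∑ i : {j // ¬ P j}, (x i).val : ℕ) : ZMod 4) with hq₀
  set F : Finset ({j // P j} → ZMod 2) :=
    Finset.univ.filter (fun f => ((∑ i, (f i).val : ℕ) : ZMod 4) = p₀) with hF
  set G : Finset ({j // ¬ P j} → ZMod 2) :=
    Finset.univ.filter (fun g => ((∑ i, (g i).val : ℕ) : ZMod 4) = q₀) with hG
  -- the splitting of sums
  have hsplit : ∀ (z : Fin n → ZMod 2),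
      (∑ j, (z j).val) = (∑ i : {j // P j}, (z i).val) + ∑ i : {j // ¬ P j}, (z i).val :=
    fun z => (Fintype.sum_subtype_add_sum_subtype P (fun j => (z j).val)).symm
  have hsplit2 : ∀ (z : Fin n → ZMod 2),
      (∑ j, (z j + w j).val) = (∑ i : {j // P j}, ((z i) + 1).val) + ∑ i : {j // ¬ P j}, (z i).val := by
    intro z
    rw [(Fintype.sum_subtype_add_sum_subtype P (fun j => (z j + w j).val)).symm]
    congr 1
    · exact Finset.sum_congr rfl fun i _ => by rw [i.2]
    · exact Finset.sum_congr rfl fun i _ => by rw [zmod2_ne_one i.2, add_zero]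
  -- value of the second condition in terms of sums over subtypes
  have hval2 : ∀ (z : Fin n → ZMod 2),
      ((∑ j, (z j + w j).val : ℕ) : ZMod 4)
        = (Fintype.card {j // P j} : ZMod 4) - ((∑ i : {j // P j}, (z i).val : ℕ) : ZMod 4)
          + ((∑ i : {j // ¬ P j}, (z i).val : ℕ) : ZMod 4) := by
    intro z
    rw [hsplit2 z, Nat.cast_add]
    congr 1
    rw [Nat.cast_sum, Nat.cast_sum]
    calc (∑ i : {j // P j}, (((z i + 1).val : ℕ) : ZMod 4))
        = ∑ i : {j // P j}, ((1:ZMod 4) - (((z i).val : ℕ) : ZMod 4)) :=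
          Finset.sum_congr rfl fun i _ => cast_val_add_one (z i)
      _ = _ := by
          rw [Finset.sum_sub_distrib, Finset.sum_const, Finset.card_univ, nsmul_eq_mul, mul_one]
  -- membership of the image
  have himg : ∀ f ∈ F, ∀ g ∈ G,
      (fun j => if h : P j then f ⟨j, h⟩ else g ⟨j, h⟩) ∈
        Finset.univ.filter (fun z : Fin n → ZMod 2 =>
          ((∑ j, (z j).val : ℕ) : ZMod 4) = s ∧
          ((∑ j, (z j + w j).val : ℕ) : ZMod 4) = t) := by
    intro f hf g hg
    simp only [hF, hG, mem_filter, mem_univ, true_and] at hf hg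
    set z : Fin n → ZMod 2 := fun j => if h : P j then f ⟨j, h⟩ else g ⟨j, h⟩ with hz
    have hz1 : ∀ i : {j // P j}, z i = f i := fun i => dif_pos i.2
    have hz0 : ∀ i : {j // ¬ P j}, z i = g i := fun i => dif_neg i.2
    simp only [mem_filter, mem_univ, true_and]
    have e1 : (∑ i : {j // P j}, ((z i).val)) = ∑ i, ((f i).val) :=
      Finset.sum_congr rfl fun i _ => by rw [hz1 i]
    have e0 : (∑ i : {j // ¬ P j}, ((z i).val)) = ∑ i, ((g i).val) :=
      Finset.sum_congr rfl fun i _ => by rw [hz0 i]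
    constructor
    · rw [hsplit z, Nat.cast_add, e1, e0, hf, hg, ← hs, hsplit x, Nat.cast_add]
    · rw [hval2 z, e1, e0, hf, hg, ← ht, hval2 x]
  have hinj : Set.InjOn (fun fg : ({j // P j} → ZMod 2) × ({j // ¬ P j} → ZMod 2) =>
      fun j : Fin n => if h : P j then fg.1 ⟨j, h⟩ else fg.2 ⟨j, h⟩) ↑(F ×ˢ G) := by
    rintro ⟨a1, a2⟩ _ ⟨b1, b2⟩ _ hab
    simp only [Prod.mk.injEq]
    constructor
    · funext i
      have h := congrFun hab i.1
      simpa [dif_pos i.2] using h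
    · funext i
      have h := congrFun hab i.1
      simpa [dif_neg i.2] using h
  have hcardle : (F ×ˢ G).card ≤
      (Finset.univ.filter (fun z : Fin n → ZMod 2 =>
        ((∑ j, (z j).val : ℕ) : ZMod 4) = s ∧
        ((∑ j, (z j + w j).val : ℕ) : ZMod 4) = t)).card := by
    apply Finset.card_le_card_of_injOn _ ?_ hinj
    rintro ⟨f, g⟩ hfg
    rw [Finset.mem_coe, Finset.mem_product] at hfg
    exact himg f hfg.1 g hfg.2
  have hFc := wclassGen_card_ge {j // P j} p₀ ⟨fun i => x i, rfl⟩
  have hGc := wclassGen_card_ge {j // ¬ P j} q₀ ⟨fun i => x i, rfl⟩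
  have hprod : ((F ×ˢ G).card : ℝ) = (F.card : ℝ) * (G.card : ℝ) := by
    rw [Finset.card_product]; push_cast; ring
  have hcards : (Fintype.card {j // P j} : ℝ) + (Fintype.card {j // ¬ P j} : ℝ) = n := by
    have h1 : Fintype.card {j // P j} + Fintype.card {j // ¬ P j} = n := by
      rw [← Fintype.card_sum, Fintype.card_congr (Equiv.sumCompl P), Fintype.card_fin]
    exact_mod_cast congrArg (Nat.cast : ℕ → ℝ) h1
  calc (2:ℝ) ^ ((n:ℝ) - 6)
      = (2:ℝ) ^ ((Fintype.card {j // P j} : ℝ) - 3) * (2:ℝ) ^ ((Fintype.card {j // ¬ P j} : ℝ) - 3) := by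
        rw [← Real.rpow_add two_pos]
        congr 1
        linarith [hcards]
    _ ≤ (F.card : ℝ) * (G.card : ℝ) :=
        mul_le_mul hFc hGc (Real.rpow_nonneg (by norm_num) _) (Nat.cast_nonneg _)
    _ = ((F ×ˢ G).card : ℝ) := hprod.symm
    _ ≤ _ := by exact_mod_cast hcardle

lemma bit_add_cancel : ∀ u v w : ZMod 2, (u + w) + (v + w) = u + v := by decide
lemma bit_val_add : ∀ u v : ZMod 2, u.val + v.val = (u + v).val + 2 * (u * v).val := by decide
lemma bit_cast_val : ∀ u : ZMod 2, ((u.val : ℕ) : ZMod 2) = u := by decide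

def gfun (n : ℕ) (v : (Fin n → ZMod 2) × (Fin n → ZMod 2) × ZMod 4 × ZMod 4) : ZMod 2 :=
  (((v.2.2.1 + v.2.2.2 - ((∑ j, (v.1 j + v.2.1 j).val : ℕ) : ZMod 4)).val / 2 : ℕ) : ZMod 2)

lemma gfun_correct (n : ℕ) (x y r : Fin n → ZMod 2) :
    gfun n (store16 n x y r) = x ⬝ᵥ y := by
  unfold gfun store16
  simp only [Pi.add_apply]
  have hab : ∀ j, (x j + r j) + (y j + r j) = x j + y j := fun j => bit_add_cancel (x j) (y j) (r j)
  rw [show (∑ j, ((x j + r j) + (y j + r j)).val) = ∑ j, (x j + y j).val from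
    Finset.sum_congr rfl fun j _ => by rw [hab j]]
  set d : ℕ := ∑ j, (x j + y j).val with hd
  set N : ℕ := ∑ j, (x j * y j).val with hN
  have key : (∑ j, (x j).val) + (∑ j, (y j).val) = d + 2 * N := by
    rw [hd, hN, ← Finset.sum_add_distrib, Finset.mul_sum, ← Finset.sum_add_distrib]
    exact Finset.sum_congr rfl fun j _ => bit_val_add (x j) (y j)
  have key4 : ((∑ j, (x j).val : ℕ) : ZMod 4) + ((∑ j, (y j).val : ℕ) : ZMod 4) - (d : ZMod 4)
      = ((2 * N : ℕ) : ZMod 4) := by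
    have := congrArg (Nat.cast : ℕ → ZMod 4) key
    push_cast at this ⊢
    linear_combination this
  rw [key4]
  have hval : (((2 * N : ℕ) : ZMod 4)).val = (2 * N) % 4 := ZMod.val_natCast _ _
  rw [hval]
  have hdiv : (2 * N) % 4 / 2 = N % 2 := by omega
  rw [hdiv]
  have hdot : x ⬝ᵥ y = ((N : ℕ) : ZMod 2) := by
    rw [dotProduct, hN]
    push_cast
    exact Finset.sum_congr rfl fun j _ => (bit_cast_val (x j * y j)).symm
  rw [hdot, ZMod.natCast_mod]

lemma bit3 : ∀ u v w2 : ZMod 2, u + ((u + w2) + (v + w2)) = v := by decide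
lemma bit_inv : ∀ u v : ZMod 2, u + (v + u) = v := by decide
lemma bit3' : ∀ a b z : ZMod 2, ((a + b) + z) + (a + z) = b := by decide
lemma bit_cancel : ∀ u1 u2 w v : ZMod 2, u1 + w = v → u2 + w = v → u1 = u2 := by decide
lemma bit_solve : ∀ u w v : ZMod 2, u + w = v → w = v + u := by decide


end Aux

open Finset in
/-- given `(x⊕r, y⊕r, |x| mod 4, |y| mod 4)` the adversary can compute `x·y`
exactly, while for uniform independent `X, Y, R` the conditional min-entropy of `X` given
the stored information is at least `n − O(1)`: `Pr[X = x ∧ store = v] ≤ 2^{-(n-c)}·Pr[store = v]`. -/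
theorem stmt16 :
    ∃ c : ℝ, ∀ n : ℕ,
      (∃ g : (Fin n → ZMod 2) × (Fin n → ZMod 2) × ZMod 4 × ZMod 4 → ZMod 2,
        ∀ x y r : Fin n → ZMod 2, g (store16 n x y r) = x ⬝ᵥ y) ∧
      (∀ (x : Fin n → ZMod 2) (v : (Fin n → ZMod 2) × (Fin n → ZMod 2) × ZMod 4 × ZMod 4),
        ((Finset.univ.filter (fun yr : (Fin n → ZMod 2) × (Fin n → ZMod 2) =>
            store16 n x yr.1 yr.2 = v)).card : ℝ)
          ≤ (2:ℝ)^(-((n:ℝ) - c)) *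
            ((Finset.univ.filter
              (fun t : (Fin n → ZMod 2) × (Fin n → ZMod 2) × (Fin n → ZMod 2) =>
                store16 n t.1 t.2.1 t.2.2 = v)).card : ℝ)) := by
  refine ⟨6, fun n => ⟨⟨gfun n, gfun_correct n⟩, ?_⟩⟩
  intro x v
  obtain ⟨a, b, s, t⟩ := v
  set L := Finset.univ.filter (fun yr : (Fin n → ZMod 2) × (Fin n → ZMod 2) =>
    store16 n x yr.1 yr.2 = (a, b, s, t)) with hLdef
  set R := Finset.univ.filter
    (fun t' : (Fin n → ZMod 2) × (Fin n → ZMod 2) × (Fin n → ZMod 2) =>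
      store16 n t'.1 t'.2.1 t'.2.2 = (a, b, s, t)) with hRdef
  rcases L.eq_empty_or_nonempty with hE | ⟨⟨y, r⟩, hyr⟩
  · rw [hE]
    simp only [Finset.card_empty, Nat.cast_zero]
    positivity
  · rw [hLdef, mem_filter] at hyr
    obtain ⟨-, hyr⟩ := hyr
    unfold store16 at hyr
    simp only [Prod.mk.injEq] at hyr
    obtain ⟨ha, hb, hs, ht'⟩ := hyr
    set w : Fin n → ZMod 2 := a + b with hwdef
    have hxw : ∀ j, x j + w j = y j := by
      intro j
      have haj : a j = x j + r j := by rw [← ha]; rfl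
      have hbj : b j = y j + r j := by rw [← hb]; rfl
      have : w j = a j + b j := rfl
      rw [this, haj, hbj]
      exact bit3 (x j) (y j) (r j)
    have ht : ((∑ j, (x j + w j).val : ℕ) : ZMod 4) = t := by
      rw [show (∑ j, (x j + w j).val) = ∑ j, (y j).val from
        Finset.sum_congr rfl fun j _ => by rw [hxw j]]
      exact ht'
    set T := Finset.univ.filter (fun z : Fin n → ZMod 2 =>
      ((∑ j, (z j).val : ℕ) : ZMod 4) = s ∧
      ((∑ j, (z j + w j).val : ℕ) : ZMod 4) = t) with hTdef
    have hT := T_card_ge n w s t x hs ht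
    -- injection from T into R
    have hTR : T.card ≤ R.card := by
      apply Finset.card_le_card_of_injOn (fun z => (z, w + z, a + z))
      · intro z hz
        simp only [Finset.mem_coe, hTdef, mem_filter] at hz
        obtain ⟨-, hz1, hz2⟩ := hz
        rw [Finset.mem_coe, hRdef, mem_filter]
        refine ⟨mem_univ _, ?_⟩
        unfold store16
        simp only [Prod.mk.injEq]
        refine ⟨?_, ?_, hz1, ?_⟩
        · funext j
          exact bit_inv (z j) (a j)
        · funext j
          exact bit3' (a j) (b j) (z j)
        · rw [show (∑ j, ((w + z) j).val) = ∑ j, (z j + w j).val from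
            Finset.sum_congr rfl fun j _ => by rw [Pi.add_apply, add_comm]]
          exact hz2
      · intro z1 _ z2 _ h
        exact congrArg Prod.fst h
    -- L has at most one element
    have hL1 : L.card ≤ 1 := by
      apply Finset.card_le_one.mpr
      rintro ⟨y1, r1⟩ h1 ⟨y2, r2⟩ h2
      rw [hLdef, mem_filter] at h1 h2
      unfold store16 at h1 h2
      simp only [Prod.mk.injEq] at h1 h2
      obtain ⟨-, ha1, hb1, -, -⟩ := h1
      obtain ⟨-, ha2, hb2, -, -⟩ := h2
      have hr : r1 = r2 := by
        funext j
        have e1 : x j + r1 j = a j := by rw [← ha1]; rfl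
        have e2 : x j + r2 j = a j := by rw [← ha2]; rfl
        have := bit_solve (x j) (r1 j) (a j) e1
        have := bit_solve (x j) (r2 j) (a j) e2
        rw [bit_solve (x j) (r1 j) (a j) e1, bit_solve (x j) (r2 j) (a j) e2]
      have hy : y1 = y2 := by
        funext j
        have e1 : y1 j + r1 j = b j := by rw [← hb1]; rfl
        have e2 : y2 j + r2 j = b j := by rw [← hb2]; rfl
        rw [hr] at e1
        exact bit_cancel (y1 j) (y2 j) (r2 j) (b j) e1 e2
      rw [Prod.mk.injEq]
      exact ⟨hy, hr⟩
    -- final arithmetic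
    have hR : (2:ℝ) ^ ((n:ℝ) - 6) ≤ (R.card : ℝ) :=
      le_trans hT (by exact_mod_cast hTR)
    calc (L.card : ℝ) ≤ 1 := by exact_mod_cast hL1
      _ = (2:ℝ) ^ (-((n:ℝ) - 6)) * (2:ℝ) ^ ((n:ℝ) - 6) := by
          rw [← Real.rpow_add two_pos]
          norm_num
      _ ≤ (2:ℝ) ^ (-((n:ℝ) - 6)) * (R.card : ℝ) := by
          apply mul_le_mul_of_nonneg_left hR (Real.rpow_nonneg (by norm_num) _)
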